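/- Let α ∈ (0,1], let t > 0, and let f : ℝ → ℝ be differentiable at t. Then the conformable fractional derivative of f at t exists and satisfies D^α f(t) = t^{1−α} f′(t), i.e. lim_{ε→0} [f(t·e^{ε t^{−α}}) − f(t)]/ε = t^{1−α} f′(t). -/

import Mathlib

/-- For `α ∈ (0,1]`, `t > 0`, and `f` differentiable at `t`, the conformable
fractional derivative `D^α f(t) := lim_{ε→0} [f(t·e^{ε t^{−α}}) − f(t)]/ε` exists and equals
`t^{1−α} f′(t)`. -/
theorem conformable_deriv_of_differentiable
    (α : ℝ) (hα : α ∈ Set.Ioc (0:ℝ) 1) (t : ℝ) (ht : 0 < t)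
    (f : ℝ → ℝ) (hf : DifferentiableAt ℝ f t) :
    Filter.Tendsto (fun ε : ℝ => (f (t * Real.exp (ε * t ^ (-α))) - f t) / ε)
      (nhdsWithin 0 {(0:ℝ)}ᶜ) (nhds (t ^ (1 - α) * deriv f t)) := by
  set c : ℝ := t ^ (-α) with hc
  have hinner : HasDerivAt (fun ε : ℝ => t * Real.exp (ε * c)) (t * c) 0 := by
    have h1 : HasDerivAt (fun ε : ℝ => ε * c) c 0 := by simpa using (hasDerivAt_id (0:ℝ)).mul_const c
    have h2 := (Real.hasDerivAt_exp (0 * c)).comp 0 h1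
    simpa using h2.const_mul t
  have hval : t * Real.exp (0 * c) = t := by simp
  have hcomp : HasDerivAt (fun ε : ℝ => f (t * Real.exp (ε * c)))
      (t ^ (1 - α) * deriv f t) 0 := by
    have hf' : HasDerivAt f (deriv f t) (t * Real.exp (0 * c)) := by rw [hval]; exact hf.hasDerivAt
    have := (hf'.comp 0 (by simpa [hval] using hinner) :
      HasDerivAt (fun ε : ℝ => f (t * Real.exp (ε * c))) (deriv f t * (t * c)) 0)
    refine this.congr_deriv ?_
    rw [hc]
    rw [show (1 : ℝ) - α = 1 + (-α) by ring, Real.rpow_add ht, Real.rpow_one]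
    ring
  have := hasDerivAt_iff_tendsto_slope.mp hcomp
  refine this.congr fun ε => ?_
  simp [slope, hval, div_eq_inv_mul]
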